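/- Let x < y be real numbers, let f : [x,y] → ℝ be continuous and convex, and let F : [x,y] → ℝ be an antiderivative of f. Then f((x+y)/2) ≤ (−3F((3x+y)/4) + (25/11)F((11x+9y)/20) + (8/11)F(y))/(y−x) ≤ (1/(y−x)) ∫ₓʸ f(t) dt. -/

import Mathlib

open MeasureTheory Set intervalIntegral

private lemma ftc_aux (x y a b : ℝ) (hax : x ≤ a) (hab : a ≤ b) (hby : b ≤ y)
    (f F : ℝ → ℝ) (hf_cont : ContinuousOn f (Set.Icc x y))
    (hF : ∀ t ∈ Set.Icc x y, HasDerivWithinAt F (f t) (Set.Icc x y) t) :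
    ∫ t in a..b, f t = F b - F a := by
  have hsub : Set.Icc a b ⊆ Set.Icc x y := Set.Icc_subset_Icc hax hby
  apply intervalIntegral.integral_eq_sub_of_hasDeriv_right_of_le hab
  · exact fun t ht => ((hF t (hsub ht)).continuousWithinAt).mono hsub
  · intro t ht
    have htxy : t ∈ Set.Ioo x y := ⟨lt_of_le_of_lt hax ht.1, lt_of_lt_of_le ht.2 hby⟩
    exact ((hF t (Set.Ioo_subset_Icc_self htxy)).hasDerivAt
      (Icc_mem_nhds htxy.1 htxy.2)).hasDerivWithinAt
  · exact (hf_cont.mono hsub).intervalIntegrable_of_Icc hab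

/-- Left Hermite–Hadamard on a subinterval. -/
private lemma hh_left (x y a b : ℝ) (hab : a < b) (hax : x ≤ a) (hby : b ≤ y)
    (f : ℝ → ℝ) (hf_cont : ContinuousOn f (Set.Icc x y))
    (hf_conv : ConvexOn ℝ (Set.Icc x y) f) :
    (b - a) * f ((a + b) / 2) ≤ ∫ t in a..b, f t := by
  have hsub : Set.Icc a b ⊆ Set.Icc x y := Set.Icc_subset_Icc hax hby
  have h0 : volume (Set.Icc a b) ≠ 0 := by
    simp [Real.volume_Icc]
    linarith
  have hT : volume (Set.Icc a b) ≠ ⊤ := by simp [Real.volume_Icc]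
  have hfs : ∀ᵐ t ∂(volume.restrict (Set.Icc a b)), t ∈ Set.Icc x y := by
    filter_upwards [ae_restrict_mem measurableSet_Icc] with t ht using hsub ht
  have hfi : IntegrableOn (fun t : ℝ => t) (Set.Icc a b) volume :=
    continuous_id.continuousOn.integrableOn_Icc
  have hgi : IntegrableOn (fun t : ℝ => f t) (Set.Icc a b) volume :=
    (hf_cont.mono hsub).integrableOn_Icc
  have key := hf_conv.map_set_average_le hf_cont isClosed_Icc h0 hT hfs hfi hgi
  have hvol : (volume (Set.Icc a b)).toReal = b - a := by
    rw [Real.volume_Icc, ENNReal.toReal_ofReal (by linarith)]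
  have hne : b - a ≠ 0 := by linarith
  have havg1 : (⨍ t in Set.Icc a b, t : ℝ) = (a + b) / 2 := by
    rw [setAverage_eq, measureReal_def, hvol, MeasureTheory.integral_Icc_eq_integral_Ioc,
      ← intervalIntegral.integral_of_le hab.le, integral_id, smul_eq_mul]
    field_simp
    ring
  have havg2 : (⨍ t in Set.Icc a b, f t : ℝ) = (b - a)⁻¹ * ∫ t in a..b, f t := by
    rw [setAverage_eq, measureReal_def, hvol, MeasureTheory.integral_Icc_eq_integral_Ioc,
      ← intervalIntegral.integral_of_le hab.le, smul_eq_mul]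
  rw [havg1, havg2] at key
  have hba : (0:ℝ) < b - a := by linarith
  calc (b - a) * f ((a + b) / 2) ≤ (b - a) * ((b - a)⁻¹ * ∫ t in a..b, f t) :=
        mul_le_mul_of_nonneg_left key hba.le
    _ = ∫ t in a..b, f t := by field_simp

/-- Right Hermite–Hadamard on a subinterval. -/
private lemma hh_right (x y a b : ℝ) (hab : a < b) (hax : x ≤ a) (hby : b ≤ y)
    (f : ℝ → ℝ) (hf_cont : ContinuousOn f (Set.Icc x y))
    (hf_conv : ConvexOn ℝ (Set.Icc x y) f) :
    ∫ t in a..b, f t ≤ (b - a) * (f a + f b) / 2 := by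
  have hsub : Set.Icc a b ⊆ Set.Icc x y := Set.Icc_subset_Icc hax hby
  have hba : (0:ℝ) < b - a := by linarith
  have ha : a ∈ Set.Icc x y := hsub ⟨le_refl a, hab.le⟩
  have hb : b ∈ Set.Icc x y := hsub ⟨hab.le, le_refl b⟩
  have hpt : ∀ t ∈ Set.Icc a b, f t ≤ f a + (f b - f a) / (b - a) * (t - a) := by
    intro t ht
    have h1 : (0:ℝ) ≤ (b - t) / (b - a) := by
      apply div_nonneg <;> linarith [ht.2]
    have h2 : (0:ℝ) ≤ (t - a) / (b - a) := by
      apply div_nonneg <;> linarith [ht.1]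
    have h3 : (b - t) / (b - a) + (t - a) / (b - a) = 1 := by field_simp; ring
    have hne : b - a ≠ 0 := by linarith
    have h := hf_conv.2 ha hb h1 h2 h3
    simp only [smul_eq_mul] at h
    have ht' : (b - t) / (b - a) * a + (t - a) / (b - a) * b = t := by
      field_simp; ring
    rw [ht'] at h
    have hkey : (b - t) / (b - a) * f a + (t - a) / (b - a) * f b
        = f a + (f b - f a) / (b - a) * (t - a) := by
      field_simp; ring
    linarith
  have hint1 : IntervalIntegrable f volume a b :=
    (hf_cont.mono hsub).intervalIntegrable_of_Icc hab.le
  have hint2 : IntervalIntegrable (fun t => f a + (f b - f a) / (b - a) * (t - a)) volume a b :=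
    Continuous.intervalIntegrable (by continuity) a b
  have hmono := intervalIntegral.integral_mono_on hab.le hint1 hint2 hpt
  have hcomp : (∫ t in a..b, (f a + (f b - f a) / (b - a) * (t - a)))
      = (b - a) * (f a + f b) / 2 := by
    have : (fun t : ℝ => f a + (f b - f a) / (b - a) * (t - a))
        = fun t : ℝ => (f a - (f b - f a) / (b - a) * a) + ((f b - f a) / (b - a)) * t := by
      funext t; ring
    rw [this, intervalIntegral.integral_add intervalIntegrable_const
      (intervalIntegrable_id.const_mul _),
      intervalIntegral.integral_const, intervalIntegral.integral_const_mul, integral_id,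
      smul_eq_mul]
    field_simp
    ring
  linarith [hmono, hcomp.le]

/-- Remark 3: the inequality
`f((x+y)/2) ≤ (-3F((3x+y)/4) + (25/11)F((11x+9y)/20) + (8/11)F(y))/(y-x) ≤ (1/(y-x))∫ₓʸ f`
holds for every continuous convex `f` and its antiderivative `F`. -/
theorem stmt_3 (x y : ℝ) (hxy : x < y) (f F : ℝ → ℝ)
    (hf_cont : ContinuousOn f (Set.Icc x y)) (hf_conv : ConvexOn ℝ (Set.Icc x y) f)
    (hF : ∀ t ∈ Set.Icc x y, HasDerivWithinAt F (f t) (Set.Icc x y) t) :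
    f ((x + y) / 2)
        ≤ (-3 * F ((3 * x + y) / 4) + (25 / 11) * F ((11 * x + 9 * y) / 20)
            + (8 / 11) * F y) / (y - x) ∧
      (-3 * F ((3 * x + y) / 4) + (25 / 11) * F ((11 * x + 9 * y) / 20)
            + (8 / 11) * F y) / (y - x)
        ≤ (1 / (y - x)) * ∫ t in x..y, f t := by
  have hΔ : (0:ℝ) < y - x := by linarith
  set p : ℝ := (3 * x + y) / 4 with hp
  set q : ℝ := (11 * x + 9 * y) / 20 with hq
  have hxp : x ≤ p := by rw [hp]; linarith
  have hpq : p < q := by rw [hp, hq]; linarith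
  have hqy : q < y := by rw [hq]; linarith
  -- FTC facts
  have FTCpq : ∫ t in p..q, f t = F q - F p :=
    ftc_aux x y p q hxp hpq.le (by linarith) f F hf_cont hF
  have FTCqy : ∫ t in q..y, f t = F y - F q :=
    ftc_aux x y q y (by linarith) hqy.le le_rfl f F hf_cont hF
  -- splitting the big integral
  have hintxp : IntervalIntegrable f volume x p :=
    (hf_cont.mono (Set.Icc_subset_Icc le_rfl (by linarith))).intervalIntegrable_of_Icc hxp
  have hintpq : IntervalIntegrable f volume p q :=
    (hf_cont.mono (Set.Icc_subset_Icc hxp (by linarith))).intervalIntegrable_of_Icc hpq.le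
  have hintqy : IntervalIntegrable f volume q y :=
    (hf_cont.mono (Set.Icc_subset_Icc (by linarith) le_rfl)).intervalIntegrable_of_Icc hqy.le
  have hsplit : (∫ t in x..y, f t)
      = (∫ t in x..p, f t) + (∫ t in p..q, f t) + (∫ t in q..y, f t) := by
    rw [intervalIntegral.integral_add_adjacent_intervals hintxp hintpq,
      intervalIntegral.integral_add_adjacent_intervals (hintxp.trans hintpq) hintqy]
  -- HH left on [p,q] and [p,y]
  have H1 : (q - p) * f ((p + q) / 2) ≤ ∫ t in p..q, f t :=
    hh_left x y p q hpq hxp hqy.le f hf_cont hf_conv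
  have H2 : (y - p) * f ((p + y) / 2) ≤ ∫ t in p..y, f t :=
    hh_left x y p y (by linarith) hxp le_rfl f hf_cont hf_conv
  have FTCpy : ∫ t in p..y, f t = F y - F p :=
    ftc_aux x y p y hxp (by linarith) le_rfl f F hf_cont hF
  -- HH right on [p,q]
  have H3 : (∫ t in p..q, f t) ≤ (q - p) * (f p + f q) / 2 :=
    hh_right x y p q hpq hxp hqy.le f hf_cont hf_conv
  -- HH left on [x,p] and [q,y]
  have H4 : (p - x) * f ((x + p) / 2) ≤ ∫ t in x..p, f t :=
    hh_left x y x p (by rw [hp]; linarith) le_rfl (by linarith) f hf_cont hf_conv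
  have H5 : (y - q) * f ((q + y) / 2) ≤ ∫ t in q..y, f t :=
    hh_left x y q y hqy (by linarith) le_rfl f hf_cont hf_conv
  -- convexity combinations
  have hmemIcc : ∀ a : ℝ, x ≤ a → a ≤ y → a ∈ Set.Icc x y := fun a h1 h2 => ⟨h1, h2⟩
  have C1 : f ((x + y) / 2) ≤ (5/11) * f ((p + q) / 2) + (6/11) * f ((p + y) / 2) := by
    have h := hf_conv.2 (hmemIcc ((p+q)/2) (by rw [hp,hq]; linarith) (by rw [hp,hq]; linarith))
      (hmemIcc ((p+y)/2) (by rw [hp]; linarith) (by rw [hp]; linarith))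
      (by norm_num : (0:ℝ) ≤ 5/11) (by norm_num : (0:ℝ) ≤ 6/11) (by norm_num)
    simp only [smul_eq_mul] at h
    have heq : (5/11 : ℝ) * ((p + q) / 2) + (6/11) * ((p + y) / 2) = (x + y) / 2 := by
      rw [hp, hq]; ring
    rw [heq] at h
    exact h
  have C2 : f p ≤ (19/24) * f ((x + p) / 2) + (5/24) * f ((q + y) / 2) := by
    have h := hf_conv.2 (hmemIcc ((x+p)/2) (by rw [hp]; linarith) (by rw [hp]; linarith))
      (hmemIcc ((q+y)/2) (by rw [hq]; linarith) (by rw [hq]; linarith))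
      (by norm_num : (0:ℝ) ≤ 19/24) (by norm_num : (0:ℝ) ≤ 5/24) (by norm_num)
    simp only [smul_eq_mul] at h
    have heq : (19/24 : ℝ) * ((x + p) / 2) + (5/24) * ((q + y) / 2) = p := by
      rw [hp, hq]; ring
    rw [heq] at h
    exact h
  have C3 : f q ≤ (11/24) * f ((x + p) / 2) + (13/24) * f ((q + y) / 2) := by
    have h := hf_conv.2 (hmemIcc ((x+p)/2) (by rw [hp]; linarith) (by rw [hp]; linarith))
      (hmemIcc ((q+y)/2) (by rw [hq]; linarith) (by rw [hq]; linarith))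
      (by norm_num : (0:ℝ) ≤ 11/24) (by norm_num : (0:ℝ) ≤ 13/24) (by norm_num)
    simp only [smul_eq_mul] at h
    have heq : (11/24 : ℝ) * ((x + p) / 2) + (13/24) * ((q + y) / 2) = q := by
      rw [hp, hq]; ring
    rw [heq] at h
    exact h
  -- lengths
  have hlen1 : q - p = (y - x) / 5 := by rw [hp, hq]; ring
  have hlen2 : y - p = 3 * (y - x) / 4 := by rw [hp]; ring
  have hlen3 : p - x = (y - x) / 4 := by rw [hp]; ring
  have hlen4 : y - q = 11 * (y - x) / 20 := by rw [hq]; ring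
  rw [hlen1] at H1 H3
  rw [hlen2] at H2
  rw [hlen3] at H4
  rw [hlen4] at H5
  set A1 := f ((p + q) / 2)
  set A2 := f ((p + y) / 2)
  set B1 := f ((x + p) / 2)
  set B2 := f ((q + y) / 2)
  constructor
  · rw [le_div_iff₀ hΔ]
    have hC1' : f ((x + y) / 2) * (y - x) ≤ ((5/11) * A1 + (6/11) * A2) * (y - x) :=
      mul_le_mul_of_nonneg_right C1 hΔ.le
    linarith [H1, H2, FTCpq, FTCpy, hC1']
  · rw [div_le_iff₀ hΔ]
    have hIeq : (1 / (y - x)) * (∫ t in x..y, f t) * (y - x) = ∫ t in x..y, f t := by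
      field_simp
    rw [hIeq]
    have hC2' : f p * ((y - x)/5) ≤ ((19/24) * B1 + (5/24) * B2) * ((y - x)/5) :=
      mul_le_mul_of_nonneg_right C2 (by linarith)
    have hC3' : f q * ((y - x)/5) ≤ ((11/24) * B1 + (13/24) * B2) * ((y - x)/5) :=
      mul_le_mul_of_nonneg_right C3 (by linarith)
    linarith [H3, H4, H5, FTCpq, FTCqy, hsplit, hC2', hC3']
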